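/- The second moment of the distance between two independent uniformly distributed points in the unit rhombus equals 1/3; that is, the integral of ‖p − q‖² over (p, q) ∈ R × R with respect to the product Lebesgue measure equals (3/4)·(1/3) = 1/4. -/

import Mathlib

open MeasureTheory Real

noncomputable section

/-- The vector a = (1, 0) in the Euclidean plane. -/
def va : EuclideanSpace ℝ (Fin 2) := !₂[1, 0]

/-- The vector b = (1/2, √3/2) in the Euclidean plane. -/
def vb : EuclideanSpace ℝ (Fin 2) := !₂[1/2, Real.sqrt 3 / 2]

/-- The unit rhombus R = {s•a + t•b : s, t ∈ [0,1]}, with unit side and acute angle π/3. -/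
def Rhombus : Set (EuclideanSpace ℝ (Fin 2)) :=
  {p | ∃ s t : ℝ, s ∈ Set.Icc (0:ℝ) 1 ∧ t ∈ Set.Icc (0:ℝ) 1 ∧ p = s • va + t • vb}

/-- V(A, B, d): Lebesgue measure of the set of pairs (p, q), p ∈ A, q ∈ B, ‖p − q‖ ≤ d. -/
def V (A B : Set (EuclideanSpace ℝ (Fin 2))) (d : ℝ) : ℝ :=
  (volume {pq : EuclideanSpace ℝ (Fin 2) × EuclideanSpace ℝ (Fin 2) |
    pq.1 ∈ A ∧ pq.2 ∈ B ∧ ‖pq.1 - pq.2‖ ≤ d}).toReal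

end

noncomputable section RhombusAux

abbrev E2 := EuclideanSpace ℝ (Fin 2)

def Tmap : E2 →L[ℝ] E2 :=
  (EuclideanSpace.proj (0 : Fin 2)).smulRight va + (EuclideanSpace.proj (1 : Fin 2)).smulRight vb

lemma Tmap_apply (x : E2) : Tmap x = x 0 • va + x 1 • vb := by
  simp [Tmap]

lemma Tmap_coord (x : E2) (i : Fin 2) : Tmap x i = x 0 * va i + x 1 * vb i := by
  rw [Tmap_apply]
  simp [PiLp.add_apply, PiLp.smul_apply]

def Sbox : Set E2 := {x | x 0 ∈ Set.Icc (0:ℝ) 1 ∧ x 1 ∈ Set.Icc (0:ℝ) 1}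

lemma Rhombus_eq : Rhombus = Tmap '' Sbox := by
  ext p
  constructor
  · rintro ⟨s, t, hs, ht, rfl⟩
    exact ⟨!₂[s, t], ⟨hs, ht⟩, by rw [Tmap_apply]; norm_num⟩
  · rintro ⟨x, ⟨h0, h1⟩, rfl⟩
    exact ⟨x 0, x 1, h0, h1, (Tmap_apply x)⟩

lemma sqrt3_pos : (0:ℝ) < Real.sqrt 3 := Real.sqrt_pos.mpr (by norm_num)

lemma Tmap_inj : Function.Injective Tmap := by
  intro x y hxy
  have h1 : Tmap x 1 = Tmap y 1 := by rw [hxy]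
  have h0 : Tmap x 0 = Tmap y 0 := by rw [hxy]
  rw [Tmap_coord, Tmap_coord] at h1 h0
  simp [va, vb] at h1
  simp [va, vb] at h0
  have hx1 : x 1 = y 1 := h1
  ext i
  fin_cases i
  · simpa [hx1] using h0
  · exact hx1

lemma Sbox_meas : MeasurableSet Sbox := by
  have h0 : Measurable fun x : E2 => x 0 := (EuclideanSpace.proj (0 : Fin 2)).continuous.measurable
  have h1 : Measurable fun x : E2 => x 1 := (EuclideanSpace.proj (1 : Fin 2)).continuous.measurable
  exact (h0 measurableSet_Icc).inter (h1 measurableSet_Icc)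

lemma Tmap_det : (Tmap : E2 →L[ℝ] E2).det = Real.sqrt 3 / 2 := by
  have bb := PiLp.basisFun 2 ℝ (Fin 2)
  rw [ContinuousLinearMap.det, ← LinearMap.det_toMatrix (PiLp.basisFun 2 ℝ (Fin 2))]
  have hM : LinearMap.toMatrix (PiLp.basisFun 2 ℝ (Fin 2)) (PiLp.basisFun 2 ℝ (Fin 2))
      (Tmap : E2 →ₗ[ℝ] E2) = !![1, 1/2; 0, Real.sqrt 3 / 2] := by
    ext i j
    rw [LinearMap.toMatrix_apply]
    fin_cases i <;> fin_cases j <;>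
      simp [PiLp.basisFun_repr, PiLp.basisFun_apply, ContinuousLinearMap.coe_coe, Tmap_coord,
        va, vb, Pi.single, Function.update]
  rw [hM, Matrix.det_fin_two_of]
  ring

lemma transfer (f : ℝ → ℝ → ℝ) (hf : Continuous fun p : ℝ × ℝ => f p.1 p.2) :
    ∫ x in Sbox, f (x 0) (x 1) ∂(volume : Measure E2)
      = ∫ x in Set.Icc (0:ℝ) 1, ∫ y in Set.Icc (0:ℝ) 1, f x y := by
  have e1 := EuclideanSpace.volume_preserving_symm_measurableEquiv_toLp (Fin 2)
  have e2 := volume_preserving_finTwoArrow ℝ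
  have step1 : ∫ x in Sbox, f (x 0) (x 1) ∂(volume : Measure E2)
      = ∫ y in {y : Fin 2 → ℝ | y 0 ∈ Set.Icc (0:ℝ) 1 ∧ y 1 ∈ Set.Icc (0:ℝ) 1},
          f (y 0) (y 1) :=
    e1.setIntegral_preimage_emb (MeasurableEquiv.toLp 2 (Fin 2 → ℝ)).symm.measurableEmbedding
      (fun y => f (y 0) (y 1))
      {y : Fin 2 → ℝ | y 0 ∈ Set.Icc (0:ℝ) 1 ∧ y 1 ∈ Set.Icc (0:ℝ) 1}
  have step2 : ∫ y in {y : Fin 2 → ℝ | y 0 ∈ Set.Icc (0:ℝ) 1 ∧ y 1 ∈ Set.Icc (0:ℝ) 1},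
          f (y 0) (y 1)
      = ∫ z in (Set.Icc (0:ℝ) 1) ×ˢ (Set.Icc (0:ℝ) 1), f z.1 z.2 :=
    e2.setIntegral_preimage_emb (MeasurableEquiv.finTwoArrow).measurableEmbedding
      (fun z => f z.1 z.2) ((Set.Icc (0:ℝ) 1) ×ˢ (Set.Icc (0:ℝ) 1))
  rw [step1, step2, Measure.volume_eq_prod, setIntegral_prod]
  exact (hf.continuousOn).integrableOn_compact (isCompact_Icc.prod isCompact_Icc)

lemma poly_int (A B C : ℝ) :
    ∫ x in Set.Icc (0:ℝ) 1, (A*x^2 + B*x + C) = A/3 + B/2 + C := by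
  rw [MeasureTheory.integral_Icc_eq_integral_Ioc, ← intervalIntegral.integral_of_le zero_le_one]
  have h : ∀ x ∈ Set.uIcc (0:ℝ) 1,
      HasDerivAt (fun x : ℝ => A*x^3/3 + B*x^2/2 + C*x) (A*x^2 + B*x + C) x := by
    intro x _
    have h := (((hasDerivAt_pow 3 x).const_mul A).div_const 3).add
        ((((hasDerivAt_pow 2 x).const_mul B).div_const 2).add ((hasDerivAt_id x).const_mul C))
    have e1 : ((fun x : ℝ => A * x ^ 3 / 3) + ((fun x : ℝ => B * x ^ 2 / 2) + fun y : ℝ => C * id y))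
        = fun x : ℝ => A*x^3/3 + B*x^2/2 + C*x := by funext x; simp only [Pi.add_apply, id]; ring
    rw [e1] at h
    refine h.congr_deriv ?_
    norm_num
    ring
  rw [intervalIntegral.integral_eq_sub_of_hasDerivAt h
    ((Continuous.intervalIntegrable (by continuity) 0 1))]
  norm_num

lemma norm_sq_eq (x : E2) : ‖x‖^2 = (x 0)^2 + (x 1)^2 := by
  rw [EuclideanSpace.norm_eq, Real.sq_sqrt (by positivity)]
  simp [Fin.sum_univ_two, sq_abs]

lemma Tmap_norm_sq (u v : E2) : ‖Tmap u - Tmap v‖^2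
    = (u 0 - v 0)^2 + (u 0 - v 0)*(u 1 - v 1) + (u 1 - v 1)^2 := by
  have h3 : Real.sqrt 3 ^ 2 = 3 := Real.sq_sqrt (by norm_num)
  rw [norm_sq_eq]
  have c0 : (Tmap u - Tmap v) 0 = (u 0 - v 0) + (u 1 - v 1) * (1/2) := by
    simp [PiLp.sub_apply, Tmap_coord, va, vb]; ring
  have c1 : (Tmap u - Tmap v) 1 = (u 1 - v 1) * (Real.sqrt 3 / 2) := by
    simp [PiLp.sub_apply, Tmap_coord, va, vb]; ring
  rw [c0, c1]
  nlinarith [h3]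

lemma inner_val (a b : ℝ) :
    (∫ v in Sbox, ((a - v 0)^2 + (a - v 0)*(b - v 1) + (b - v 1)^2) ∂(volume : Measure E2))
      = (a^2 - a + 1/3) + (a - 1/2)*(b - 1/2) + (b^2 - b + 1/3) := by
  have h := transfer (fun x y => (a-x)^2 + (a-x)*(b-y) + (b-y)^2) (by fun_prop)
  rw [h]
  have inner1 : ∀ x : ℝ, (∫ y in Set.Icc (0:ℝ) 1, ((a-x)^2 + (a-x)*(b-y) + (b-y)^2))
      = (a-x)^2 + (a-x)*(b-1/2) + (b^2 - b + 1/3) := by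
    intro x
    have e : (fun y : ℝ => (a-x)^2 + (a-x)*(b-y) + (b-y)^2)
        = fun y : ℝ => 1*y^2 + (-(a-x) - 2*b)*y + ((a-x)^2 + (a-x)*b + b^2) := by
      funext y; ring
    rw [e, poly_int]; ring
  simp only [inner1]
  have e2 : (fun x : ℝ => (a-x)^2 + (a-x)*(b-1/2) + (b^2 - b + 1/3))
      = fun x : ℝ => 1*x^2 + (-2*a - (b-1/2))*x + (a^2 + a*(b-1/2) + (b^2 - b + 1/3)) := by
    funext x; ring
  rw [e2, poly_int]; ring

lemma outer_val :
    (∫ u in Sbox, ((u 0)^2 - u 0 + 1/3 + (u 0 - 1/2)*(u 1 - 1/2) + ((u 1)^2 - u 1 + 1/3))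
        ∂(volume : Measure E2)) = 1/3 := by
  have h := transfer (fun x y => x^2 - x + 1/3 + (x - 1/2)*(y - 1/2) + (y^2 - y + 1/3))
    (by fun_prop)
  rw [h]
  have inner1 : ∀ x : ℝ, (∫ y in Set.Icc (0:ℝ) 1,
        (x^2 - x + 1/3 + (x - 1/2)*(y - 1/2) + (y^2 - y + 1/3))) = x^2 - x + 1/2 := by
    intro x
    have e : (fun y : ℝ => x^2 - x + 1/3 + (x - 1/2)*(y - 1/2) + (y^2 - y + 1/3))
        = fun y : ℝ => 1*y^2 + ((x - 1/2) - 1)*y + (x^2 - x + 1/3 - (x-1/2)/2 + 1/3) := by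
      funext y; ring
    rw [e, poly_int]; ring
  simp only [inner1]
  have e2 : (fun x : ℝ => x^2 - x + 1/2)
      = fun x : ℝ => 1*x^2 + (-1)*x + (1/2) := by funext x; ring
  rw [e2, poly_int]; ring

lemma Rhombus_compact : IsCompact Rhombus := by
  have h : Rhombus = (fun st : ℝ × ℝ => st.1 • va + st.2 • vb) ''
      (Set.Icc (0:ℝ) 1 ×ˢ Set.Icc (0:ℝ) 1) := by
    ext p; constructor
    · rintro ⟨s, t, hs, ht, rfl⟩; exact ⟨(s, t), ⟨hs, ht⟩, rfl⟩
    · rintro ⟨⟨s, t⟩, ⟨hs, ht⟩, rfl⟩; exact ⟨s, t, hs, ht, rfl⟩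
  rw [h]
  exact (isCompact_Icc.prod isCompact_Icc).image (by fun_prop)

end RhombusAux

theorem rhombus_second_moment :
    ∫ pq in Rhombus ×ˢ Rhombus,
        ‖pq.1 - pq.2‖^2 ∂(volume : Measure (EuclideanSpace ℝ (Fin 2) × EuclideanSpace ℝ (Fin 2))) =
      (3/4) * (1/3) := by
  have hRc := Rhombus_compact
  have hcont : Continuous fun pq : E2 × E2 => ‖pq.1 - pq.2‖^2 := by fun_prop
  have hint : IntegrableOn (fun pq : E2 × E2 => ‖pq.1 - pq.2‖^2)
      (Rhombus ×ˢ Rhombus) ((volume : Measure E2).prod volume) := by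
    rw [← Measure.volume_eq_prod]
    exact hcont.continuousOn.integrableOn_compact (hRc.prod hRc)
  rw [Measure.volume_eq_prod, setIntegral_prod _ hint]
  have hderiv : ∀ x ∈ Sbox, HasFDerivWithinAt Tmap (Tmap : E2 →L[ℝ] E2) Sbox x :=
    fun x _ => Tmap.hasFDerivAt.hasFDerivWithinAt
  have hinj : Set.InjOn Tmap Sbox := Tmap_inj.injOn
  have habs : |(Tmap : E2 →L[ℝ] E2).det| = Real.sqrt 3 / 2 := by
    rw [Tmap_det]; exact abs_of_pos (by positivity)
  have key : ∀ g : E2 → ℝ, ∫ q in Rhombus, g q ∂(volume : Measure E2)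
      = (Real.sqrt 3 / 2) * ∫ v in Sbox, g (Tmap v) ∂(volume : Measure E2) := by
    intro g
    rw [Rhombus_eq,
      integral_image_eq_integral_abs_det_fderiv_smul volume Sbox_meas hderiv hinj g]
    simp only [habs, smul_eq_mul]
    rw [integral_const_mul]
  have h2 : ∀ p : E2, ∫ q in Rhombus, ‖p - q‖^2 ∂(volume : Measure E2)
      = (Real.sqrt 3 / 2) * ∫ v in Sbox, ‖p - Tmap v‖^2 ∂(volume : Measure E2) :=
    fun p => key (fun q => ‖p - q‖^2)
  simp only [h2]
  rw [key (fun p => (Real.sqrt 3 / 2) * ∫ v in Sbox, ‖p - Tmap v‖^2 ∂(volume : Measure E2))]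
  have h3 : ∀ u : E2, ∫ v in Sbox, ‖Tmap u - Tmap v‖^2 ∂(volume : Measure E2)
      = ((u 0)^2 - u 0 + 1/3 + (u 0 - 1/2)*(u 1 - 1/2) + ((u 1)^2 - u 1 + 1/3)) := by
    intro u
    have e : (fun v : E2 => ‖Tmap u - Tmap v‖^2)
        = fun v : E2 => (u 0 - v 0)^2 + (u 0 - v 0)*(u 1 - v 1) + (u 1 - v 1)^2 := by
      funext v; exact Tmap_norm_sq u v
    rw [e, inner_val (u 0) (u 1)]
  simp only [h3]
  rw [integral_const_mul, outer_val]
  have hs3 : Real.sqrt 3 * Real.sqrt 3 = 3 := Real.mul_self_sqrt (by norm_num)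
  nlinarith [hs3]
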